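/- For all integers l, m, n ≥ 0, β_{l,m+n} = β_{l,m} · β_{l,n}^{↑m} in B_∞. -/

import Mathlib

namespace BraidPaper

/-- Relations of the infinite Artin braid group `B_∞`.  The generator with index `n : ℕ`
represents the Artin generator `σ_{n+1}` (so generators are `σ_1, σ_2, …`). -/
def BraidRels : Set (FreeGroup ℕ) :=
  {r | (∃ i : ℕ, r = .of i * .of (i + 1) * .of i * (.of (i + 1) * .of i * .of (i + 1))⁻¹) ∨
       (∃ i j : ℕ, i + 2 ≤ j ∧ r = .of i * .of j * (.of j * .of i)⁻¹)}

/-- The infinite Artin braid group `B_∞`, presented by generators `σ_1, σ_2, …` and the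
braid and far-commutativity relations. -/
abbrev BInf : Type := PresentedGroup BraidRels

/-- The Artin generator `σ i` of `B_∞` (meaningful for `i ≥ 1`). -/
def σ (i : ℕ) : BInf := PresentedGroup.of (i - 1)

lemma rel_eq_one {r : FreeGroup ℕ} (hr : r ∈ BraidRels) : PresentedGroup.mk BraidRels r = 1 := by
  have : r ∈ Subgroup.normalClosure BraidRels := Subgroup.subset_normalClosure hr
  exact (QuotientGroup.eq_one_iff r).mpr this

lemma gen_braid (i : ℕ) :
    (PresentedGroup.of i : BInf) * .of (i + 1) * .of i = .of (i + 1) * .of i * .of (i + 1) := by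
  have h := rel_eq_one (Or.inl ⟨i, rfl⟩)
  rw [map_mul, map_mul, map_mul, map_inv, map_mul, map_mul, mul_inv_eq_one] at h
  exact h

lemma gen_comm {i j : ℕ} (hij : i + 2 ≤ j) :
    (PresentedGroup.of i : BInf) * .of j = .of j * .of i := by
  have h := rel_eq_one (Or.inr ⟨i, j, hij, rfl⟩)
  rw [map_mul, map_mul, map_inv, map_mul, mul_inv_eq_one] at h
  exact h

/-- The shift endomorphism `↑ℓ : B_∞ → B_∞`, `σ_i ↦ σ_{i+ℓ}`. -/
def shift (l : ℕ) : BInf →* BInf :=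
  PresentedGroup.toGroup (f := fun n => (PresentedGroup.of (n + l) : BInf)) (by
    rintro r (⟨i, rfl⟩ | ⟨i, j, hij, rfl⟩) <;>
      simp only [map_mul, map_inv, FreeGroup.lift_apply_of, mul_inv_eq_one]
    · have h1 : i + 1 + l = i + l + 1 := by omega
      rw [h1]; exact gen_braid (i + l)
    · exact gen_comm (by omega : (i + l) + 2 ≤ j + l))

/-- The ascending product `σ_i σ_{i+1} ⋯ σ_{i+l-1}` (of `l` factors). -/
def asc (i l : ℕ) : BInf := ((List.range l).map fun t => σ (i + t)).prod

/-- The descending product `σ_i σ_{i-1} ⋯ σ_{i-k+1}` (of `k` factors). -/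
def desc (i k : ℕ) : BInf := ((List.range k).map fun t => σ (i - t)).prod

/-- The block transposition braid
`β_{k,l} = (σ_k σ_{k+1} ⋯ σ_{k+l-1})(σ_{k-1} σ_k ⋯ σ_{k+l-2}) ⋯ (σ_1 σ_2 ⋯ σ_l)`,
with `β_{k,0} = β_{0,l} = 1`. -/
def β (k l : ℕ) : BInf := ((List.range k).map fun r => asc (k - r) l).prod

/-- The positive (Garside) lift `ω_a = β_{1,1} β_{2,1} ⋯ β_{a-1,1}` of the longest element of
the symmetric group `S_a`, with `ω_0 = ω_1 = 1`. -/
def ω (a : ℕ) : BInf := ((List.range (a - 1)).map fun t => β (t + 1) 1).prod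

/-- The copy of the braid group `B_n` inside `B_∞`: the subgroup generated by
`σ_1, …, σ_{n-1}`. -/
def BSub (n : ℕ) : Subgroup BInf := Subgroup.closure {g | ∃ i, 1 ≤ i ∧ i < n ∧ g = σ i}

lemma shift_of (m j : ℕ) : shift m (PresentedGroup.of j) = PresentedGroup.of (j + m) := by
  simp [shift, PresentedGroup.toGroup.of]

lemma shift_sigma (m : ℕ) {i : ℕ} (hi : 1 ≤ i) : shift m (σ i) = σ (i + m) := by
  unfold σ
  rw [shift_of]
  congr 1
  omega

lemma sigma_comm {i j : ℕ} (hi : 1 ≤ i) (h : i + 2 ≤ j) : σ i * σ j = σ j * σ i := by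
  unfold σ
  exact gen_comm (by omega)

lemma asc_succ (i l : ℕ) : asc i (l + 1) = asc i l * σ (i + l) := by
  unfold asc
  rw [List.range_succ, List.map_append, List.prod_append]
  simp

lemma asc_add (i m n : ℕ) : asc i (m + n) = asc i m * asc (i + m) n := by
  induction n with
  | zero => simp [asc]
  | succ n ih =>
    have : m + (n + 1) = (m + n) + 1 := by omega
    rw [this, asc_succ, ih, asc_succ, mul_assoc, Nat.add_assoc i m n]

lemma shift_asc (m : ℕ) {i : ℕ} (hi : 1 ≤ i) (n : ℕ) :
    shift m (asc i n) = asc (i + m) n := by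
  induction n with
  | zero => simp [asc]
  | succ n ih =>
    rw [asc_succ, map_mul, ih, shift_sigma m (by omega), asc_succ]
    congr 2
    omega

lemma sigma_asc_comm {j a : ℕ} (hj : 1 ≤ j) (h : j + 2 ≤ a) (s : ℕ) :
    σ j * asc a s = asc a s * σ j := by
  induction s with
  | zero => simp [asc]
  | succ s ih =>
    rw [asc_succ, ← mul_assoc, ih, mul_assoc, mul_assoc]
    congr 1
    exact sigma_comm hj (by omega)

lemma asc_asc_comm {a b : ℕ} (hb : 1 ≤ b) (s' : ℕ) (h : b + s' + 1 ≤ a) (s : ℕ) :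
    asc a s * asc b s' = asc b s' * asc a s := by
  induction s' with
  | zero => simp [asc]
  | succ s' ih =>
    rw [asc_succ, ← mul_assoc, ih (by omega), mul_assoc, mul_assoc,
      ← sigma_asc_comm (by omega) (by omega)]

lemma beta_succ (k s : ℕ) : β (k + 1) s = asc (k + 1) s * β k s := by
  unfold β
  rw [List.range_succ_eq_map, List.map_cons, List.prod_cons, List.map_map]
  simp only [Nat.sub_zero, Function.comp_def, Nat.add_sub_add_right, Nat.succ_sub_succ_eq_sub]

lemma asc_beta_comm {a : ℕ} (l m : ℕ) (h : l + m + 1 ≤ a) (s : ℕ) :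
    asc a s * β l m = β l m * asc a s := by
  induction l with
  | zero => simp [β]
  | succ l ih =>
    rw [beta_succ, ← mul_assoc, asc_asc_comm (by omega) m (by omega), mul_assoc,
      ih (by omega), ← mul_assoc]

/-- `β_{l,m+n} = β_{l,m} · β_{l,n}^{↑m}` in `B_∞`. -/
theorem beta_add_right (l m n : ℕ) : β l (m + n) = β l m * shift m (β l n) := by
  induction l with
  | zero => simp [β]
  | succ l ih =>
    rw [beta_succ, beta_succ, beta_succ, ih, asc_add, map_mul,
      shift_asc m (by omega) n]
    have hc : asc (l + 1 + m) n * β l m = β l m * asc (l + 1 + m) n :=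
      asc_beta_comm l m (by omega) n
    calc asc (l + 1) m * asc (l + 1 + m) n * (β l m * shift m (β l n))
        = asc (l + 1) m * (asc (l + 1 + m) n * β l m) * shift m (β l n) := by
          group
      _ = asc (l + 1) m * (β l m * asc (l + 1 + m) n) * shift m (β l n) := by rw [hc]
      _ = asc (l + 1) m * β l m * (asc (l + 1 + m) n * shift m (β l n)) := by
          group

end BraidPaper
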